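/- arXiv:1401.7099 — 4 statements merged into one kernel-verified Lean document; each statement's English description precedes it below -/
import Mathlib

section
/- Let v be a rational vector in Q^n with denominator q (qv ∈ Z^n). For any continuous function f : T^n → R and any translation-invariant sup norm, the solution g(θ) = q ∫_0^1 (f - [f]_v)(θ + t q v) t dt of the equation L_v g = f - [f]_v satisfies ‖g‖_∞ ≤ q · ‖f - [f]_v‖_∞ ≤ 2q ‖f‖_∞. In particular the inverse of L_v on functions with zero v-average is a bounded operator with norm at most q. -/
/-- the solution `g` of the cohomological equation `L_v g = f - [f]_v`
given by `g θ = q ∫_0^1 (f - [f]_v)(θ + t q v) t dt` satisfies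
`‖g‖_∞ ≤ q ‖f - [f]_v‖_∞ ≤ 2 q ‖f‖_∞`: the inverse of `L_v` on functions with zero
`v`-average is bounded with norm at most `q`. -/
theorem stmt1 (n : ℕ) (v : Fin n → ℝ) (q : ℕ) (hq : 1 ≤ q)
    (hv : ∀ i, ∃ m : ℤ, (q : ℝ) * v i = (m : ℝ))
    (f : (Fin n → ℝ) → ℝ) (hf : Continuous f)
    (hper : ∀ (θ : Fin n → ℝ) (k : Fin n → ℤ), f (θ + fun i => (k i : ℝ)) = f θ)
    (favg g : (Fin n → ℝ) → ℝ)
    (hfavg : ∀ θ, favg θ = ∫ t in (0:ℝ)..1, f (θ + (t * q) • v))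
    (hg : ∀ θ, g θ = (q : ℝ) *
      ∫ t in (0:ℝ)..1, (f (θ + (t * q) • v) - favg (θ + (t * q) • v)) * t) :
    (∀ M : ℝ, (∀ θ, |f θ - favg θ| ≤ M) → ∀ θ, |g θ| ≤ (q : ℝ) * M) ∧
    (∀ M : ℝ, (∀ θ, |f θ| ≤ M) → ∀ θ, |f θ - favg θ| ≤ 2 * M) := by
  constructor
  · intro M hM θ
    have hM0 : 0 ≤ M := le_trans (abs_nonneg _) (hM θ)
    have key : |∫ t in (0:ℝ)..1,
        (f (θ + (t * q) • v) - favg (θ + (t * q) • v)) * t| ≤ M := by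
      have := intervalIntegral.norm_integral_le_of_norm_le_const
        (a := (0:ℝ)) (b := 1) (C := M)
        (f := fun t => (f (θ + (t * q) • v) - favg (θ + (t * q) • v)) * t) ?_
      · simpa using this
      · intro x hx
        rw [Set.uIoc_of_le (by norm_num)] at hx
        have hx0 : 0 ≤ x := le_of_lt hx.1
        have hx1 : x ≤ 1 := hx.2
        have h1 : ‖(f (θ + (x * q) • v) - favg (θ + (x * q) • v)) * x‖
            = |f (θ + (x * q) • v) - favg (θ + (x * q) • v)| * x := by
          rw [Real.norm_eq_abs, abs_mul, abs_of_nonneg hx0]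
        rw [h1]
        calc |f (θ + (x * q) • v) - favg (θ + (x * q) • v)| * x
            ≤ M * x := mul_le_mul_of_nonneg_right (hM _) hx0
          _ ≤ M * 1 := mul_le_mul_of_nonneg_left hx1 hM0
          _ = M := mul_one M
    rw [hg θ, abs_mul, abs_of_nonneg (by positivity : (0:ℝ) ≤ (q:ℝ))]
    exact mul_le_mul_of_nonneg_left key (by positivity)
  · intro M hM θ
    have hM0 : 0 ≤ M := le_trans (abs_nonneg _) (hM θ)
    have hfavg_le : |favg θ| ≤ M := by
      rw [hfavg θ]
      have := intervalIntegral.norm_integral_le_of_norm_le_const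
        (a := (0:ℝ)) (b := 1) (C := M)
        (f := fun t => f (θ + (t * q) • v))
        (fun x _ => by simpa [Real.norm_eq_abs] using hM (θ + (x * q) • v))
      simpa using this
    calc |f θ - favg θ| ≤ |f θ| + |favg θ| := abs_sub _ _
      _ ≤ M + M := add_le_add (hM θ) hfavg_le
      _ = 2 * M := by ring
end

section
/- (Quantitative inverse function theorem) Let O_h = {ω ∈ C^n : |ω − ω₀|_∞ < h} and let f : O_h → C^n be holomorphic with |f − Id|_h ≤ δ ≤ h/4, where |f − Id|_h = sup_{ω ∈ O_h} |f(ω) − ω|_∞. Then f has a holomorphic inverse φ : O_{h/4} → O_h satisfying f ∘ φ = Id on O_{h/4}, with the estimates |φ − Id|_{h/4} ≤ δ and (h/4)·|Dφ − Id|_{h/4} ≤ δ. -/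
set_option maxHeartbeats 1000000

open Metric Set Asymptotics Filter Topology NNReal

/-- Cauchy-type estimate: a holomorphic function bounded by `δ` on a ball of radius `h`
has derivative bounded by `δ / a` at points `x` with `‖x - c‖ + a < h`. -/
lemma cauchy_fderiv_bound {E F : Type*} [NormedAddCommGroup E] [NormedSpace ℂ E]
    [NormedAddCommGroup F] [NormedSpace ℂ F]
    {g : E → F} {c : E} {h δ : ℝ}
    (hg : DifferentiableOn ℂ g (ball c h)) (hb : ∀ x ∈ ball c h, ‖g x‖ ≤ δ)
    {x : E} {a : ℝ} (ha : 0 < a) (hx : ‖x - c‖ + a < h) :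
    ‖fderiv ℂ g x‖ ≤ δ / a := by
  have hxball : x ∈ ball c h := by
    rw [mem_ball_iff_norm]
    nlinarith [norm_nonneg (x - c)]
  have hδ0 : 0 ≤ δ := le_trans (norm_nonneg _) (hb x hxball)
  refine ContinuousLinearMap.opNorm_le_bound _ (div_nonneg hδ0 ha.le) fun v => ?_
  rcases eq_or_ne v 0 with rfl | hv
  · simp
  have hv0 : 0 < ‖v‖ := norm_pos_iff.2 hv
  set R : ℝ := a / ‖v‖ with hR
  have hRpos : 0 < R := div_pos ha hv0
  set L : ℂ → E := fun t => x + t • v with hL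
  have hmaps : ∀ t : ℂ, ‖t‖ ≤ R → L t ∈ ball c h := by
    intro t ht
    rw [mem_ball_iff_norm]
    have h1 : ‖x + t • v - c‖ ≤ ‖x - c‖ + ‖t‖ * ‖v‖ := by
      calc ‖x + t • v - c‖ = ‖(x - c) + t • v‖ := by rw [add_sub_right_comm]
        _ ≤ ‖x - c‖ + ‖t • v‖ := norm_add_le _ _
        _ = ‖x - c‖ + ‖t‖ * ‖v‖ := by rw [norm_smul]
    have h2 : ‖t‖ * ‖v‖ ≤ a := by
      calc ‖t‖ * ‖v‖ ≤ R * ‖v‖ := by gcongr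
        _ = a := by rw [hR, div_mul_cancel₀ _ hv0.ne']
    calc ‖L t - c‖ = ‖x + t • v - c‖ := rfl
      _ ≤ ‖x - c‖ + ‖t‖ * ‖v‖ := h1
      _ ≤ ‖x - c‖ + a := by linarith
      _ < h := hx
  have hLdiff : Differentiable ℂ L := by
    exact (differentiable_id.smul_const v).const_add x
  have hudiff : DifferentiableOn ℂ (g ∘ L) (closedBall 0 R) := by
    intro t ht
    have : L t ∈ ball c h := hmaps t (by simpa [mem_closedBall_iff_norm] using ht)
    exact ((hg.differentiableAt (isOpen_ball.mem_nhds this)).comp t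
      (hLdiff t)).differentiableWithinAt
  have hdcc : DiffContOnCl ℂ (g ∘ L) (ball 0 R) := by
    apply DifferentiableOn.diffContOnCl
    rwa [closure_ball (0 : ℂ) hRpos.ne']
  have hLd : HasDerivAt L v 0 := by
    have := ((hasDerivAt_id (0 : ℂ)).smul_const v).const_add x
    simpa [hL] using this
  have hgd : HasFDerivAt g (fderiv ℂ g x) (L 0) := by
    have hL0 : L 0 = x := by simp [hL]
    rw [hL0]
    exact (hg.differentiableAt (isOpen_ball.mem_nhds hxball)).hasFDerivAt
  have hud : HasDerivAt (g ∘ L) (fderiv ℂ g x v) 0 := hgd.comp_hasDerivAt 0 hLd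
  have hbound : ‖deriv (g ∘ L) 0‖ ≤ δ / R :=
    Complex.norm_deriv_le_of_forall_mem_sphere_norm_le hRpos hdcc fun z hz =>
      hb _ (hmaps z (by simpa [mem_sphere_iff_norm] using hz.le))
  rw [hud.deriv] at hbound
  calc ‖fderiv ℂ g x v‖ ≤ δ / R := hbound
    _ = δ / a * ‖v‖ := by rw [hR, div_div_eq_mul_div, div_mul_eq_mul_div]

/-- quantitative inverse function theorem: if `f` is holomorphic on the
polydisc `O_h = {ω : |ω - ω₀|_∞ < h}` with `|f - Id|_h ≤ δ ≤ h/4`, then `f` has a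
holomorphic inverse `φ : O_{h/4} → O_h` with `f ∘ φ = Id`, `|φ - Id|_{h/4} ≤ δ` and
`(h/4)·|Dφ - Id|_{h/4} ≤ δ` (operator norm induced by the sup norm). -/
theorem stmt10 (n : ℕ) (ω₀ : Fin n → ℂ) (h δ : ℝ) (hh : 0 < h)
    (hδ0 : 0 ≤ δ) (hδ : δ ≤ h / 4)
    (f : (Fin n → ℂ) → (Fin n → ℂ))
    (hf : DifferentiableOn ℂ f {ω | ∀ i, ‖ω i - ω₀ i‖ < h})
    (hclose : ∀ ω, (∀ i, ‖ω i - ω₀ i‖ < h) → ∀ i, ‖f ω i - ω i‖ ≤ δ) :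
    ∃ φ : (Fin n → ℂ) → (Fin n → ℂ),
      DifferentiableOn ℂ φ {ω | ∀ i, ‖ω i - ω₀ i‖ < h / 4} ∧
      (∀ ω, (∀ i, ‖ω i - ω₀ i‖ < h / 4) →
        (∀ i, ‖φ ω i - ω₀ i‖ < h) ∧ f (φ ω) = ω ∧ ∀ i, ‖φ ω i - ω i‖ ≤ δ) ∧
      (∀ ω, (∀ i, ‖ω i - ω₀ i‖ < h / 4) →
        (h / 4) * ‖fderiv ℂ φ ω - ContinuousLinearMap.id ℂ (Fin n → ℂ)‖ ≤ δ) := by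
  classical
  have hh4 : 0 < h / 4 := by linarith
  -- rewrite the polydiscs as sup-norm balls
  have hball : ∀ r : ℝ, 0 < r → ∀ z : Fin n → ℂ,
      z ∈ ball ω₀ r ↔ ∀ i, ‖z i - ω₀ i‖ < r := by
    intro r hr z
    rw [mem_ball, dist_pi_lt_iff hr]
    simp only [dist_eq_norm]
  have hset : {ω : Fin n → ℂ | ∀ i, ‖ω i - ω₀ i‖ < h} = ball ω₀ h := by
    ext z
    rw [mem_setOf_eq, hball h hh]
  have hset4 : {ω : Fin n → ℂ | ∀ i, ‖ω i - ω₀ i‖ < h / 4} = ball ω₀ (h / 4) := by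
    ext z
    rw [mem_setOf_eq, hball (h / 4) hh4]
  rw [hset] at hf
  set g : (Fin n → ℂ) → (Fin n → ℂ) := fun x => f x - x with hgdef
  have hg : DifferentiableOn ℂ g (ball ω₀ h) := hf.sub differentiableOn_id
  have hgb : ∀ x ∈ ball ω₀ h, ‖g x‖ ≤ δ := by
    intro x hx
    rw [pi_norm_le_iff_of_nonneg hδ0]
    intro i
    have hx' : ∀ i, ‖x i - ω₀ i‖ < h := (hball h hh x).1 hx
    simpa [hgdef] using hclose x hx' i
  -- Lipschitz estimate for `g` on the closed ball of radius `h/2`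
  have hC : δ / (3 * h / 8) ≤ 2 / 3 := by
    rw [div_le_iff₀ (by linarith)]
    linarith
  have hlip : ∀ x ∈ closedBall ω₀ (h / 2), ∀ y ∈ closedBall ω₀ (h / 2),
      ‖g y - g x‖ ≤ δ / (3 * h / 8) * ‖y - x‖ := by
    intro x hx y hy
    have hdiff : ∀ z ∈ closedBall ω₀ (h / 2), DifferentiableAt ℂ g z := fun z hz =>
      hg.differentiableAt (isOpen_ball.mem_nhds
        (mem_ball.2 (lt_of_le_of_lt (mem_closedBall.1 hz) (by linarith))))
    have hbound : ∀ z ∈ closedBall ω₀ (h / 2), ‖fderiv ℂ g z‖ ≤ δ / (3 * h / 8) := by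
      intro z hz
      refine cauchy_fderiv_bound hg hgb (by linarith) ?_
      have := mem_closedBall_iff_norm.1 hz
      linarith
    exact (convex_closedBall ω₀ (h / 2)).norm_image_sub_le_of_norm_fderiv_le hdiff hbound hx hy
  -- existence of the fixed point
  have hsub1 : closedBall ω₀ (h / 4 + δ) ⊆ closedBall ω₀ (h / 2) :=
    closedBall_subset_closedBall (by linarith)
  have hsub2 : closedBall ω₀ (h / 4 + δ) ⊆ ball ω₀ h :=
    closedBall_subset_ball (by linarith)
  have hfix : ∀ ω ∈ ball ω₀ (h / 4), ∃ x ∈ closedBall ω₀ (h / 4 + δ), f x = ω := by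
    intro ω hω
    have hωn : ‖ω - ω₀‖ < h / 4 := mem_ball_iff_norm.1 hω
    set T : (Fin n → ℂ) → (Fin n → ℂ) := fun x => x + (ω - f x) with hT
    set s : Set (Fin n → ℂ) := closedBall ω₀ (h / 4 + δ) with hs
    have hmaps : MapsTo T s s := by
      intro x hx
      have h1 : T x - ω₀ = (ω - ω₀) - g x := by
        simp only [hT, hgdef]
        abel
      rw [hs, mem_closedBall_iff_norm, h1]
      calc ‖(ω - ω₀) - g x‖ ≤ ‖ω - ω₀‖ + ‖g x‖ := norm_sub_le _ _
        _ ≤ h / 4 + δ := add_le_add hωn.le (hgb x (hsub2 hx))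
    have hcontr : ContractingWith (2 / 3 : ℝ≥0) (hmaps.restrict T s s) := by
      constructor
      · rw [← NNReal.coe_lt_coe]
        norm_num
      · refine LipschitzWith.of_dist_le_mul fun p q => ?_
        have hpq : dist (hmaps.restrict T s s p) (hmaps.restrict T s s q) = dist (T p) (T q) := by
          rw [Subtype.dist_eq]
          simp
        rw [hpq, Subtype.dist_eq, dist_eq_norm, dist_eq_norm]
        have h2 : T (p : Fin n → ℂ) - T (q : Fin n → ℂ) = g q - g p := by
          simp only [hT, hgdef]
          abel
        rw [h2]
        have h3 : ‖g (q : Fin n → ℂ) - g p‖ ≤ δ / (3 * h / 8) * ‖(q : Fin n → ℂ) - p‖ :=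
          hlip p (hsub1 p.2) q (hsub1 q.2)
        have h4 : ‖(q : Fin n → ℂ) - p‖ = ‖(p : Fin n → ℂ) - q‖ := norm_sub_rev _ _
        have h5 : δ / (3 * h / 8) * ‖(p : Fin n → ℂ) - q‖ ≤ 2 / 3 * ‖(p : Fin n → ℂ) - q‖ :=
          mul_le_mul_of_nonneg_right hC (norm_nonneg _)
        have : ((2 / 3 : ℝ≥0) : ℝ) = 2 / 3 := by norm_num
        rw [this]
        rw [h4] at h3
        linarith
    obtain ⟨y, hys, hyfix, -, -⟩ :=
      hcontr.exists_fixedPoint' (isClosed_closedBall.isComplete) hmaps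
        (mem_closedBall_self (by linarith)) (edist_ne_top _ _)
    refine ⟨y, hys, ?_⟩
    have : y + (ω - f y) = y := hyfix
    have h6 : ω - f y = 0 := by
      have := congrArg (fun z => z - y) this
      simpa using this
    have := sub_eq_zero.1 h6
    exact this.symm
  -- definition of φ
  set φ : (Fin n → ℂ) → (Fin n → ℂ) := fun ω =>
    if hω : ω ∈ ball ω₀ (h / 4) then (hfix ω hω).choose else ω with hφdef
  have hkey : ∀ ω ∈ ball ω₀ (h / 4), φ ω ∈ closedBall ω₀ (h / 4 + δ) ∧ f (φ ω) = ω := by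
    intro ω hω
    have : φ ω = (hfix ω hω).choose := dif_pos hω
    rw [this]
    exact ⟨(hfix ω hω).choose_spec.1, (hfix ω hω).choose_spec.2⟩
  have hφeq : ∀ ω ∈ ball ω₀ (h / 4), φ ω = ω - g (φ ω) := by
    intro ω hω
    have h1 : g (φ ω) = ω - φ ω := by
      simp only [hgdef]
      rw [(hkey ω hω).2]
    rw [h1]
    abel
  have hφnorm : ∀ ω ∈ ball ω₀ (h / 4), ‖φ ω - ω‖ ≤ δ := by
    intro ω hω
    have h1 : φ ω - ω = -g (φ ω) := by
      conv_lhs => rw [hφeq ω hω]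
      abel
    rw [h1, norm_neg]
    exact hgb _ (hsub2 (hkey ω hω).1)
  have hφlip : ∀ ω ∈ ball ω₀ (h / 4), ∀ ω' ∈ ball ω₀ (h / 4),
      ‖φ ω - φ ω'‖ ≤ 3 * ‖ω - ω'‖ := by
    intro ω hω ω' hω'
    have e1 : φ ω - φ ω' = (ω - ω') - (g (φ ω) - g (φ ω')) := by
      conv_lhs => rw [hφeq ω hω, hφeq ω' hω']
      abel
    have h1 : ‖g (φ ω) - g (φ ω')‖ ≤ δ / (3 * h / 8) * ‖φ ω - φ ω'‖ :=
      hlip (φ ω') (hsub1 (hkey ω' hω').1) (φ ω) (hsub1 (hkey ω hω).1)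
    have h2 : δ / (3 * h / 8) * ‖φ ω - φ ω'‖ ≤ 2 / 3 * ‖φ ω - φ ω'‖ :=
      mul_le_mul_of_nonneg_right hC (norm_nonneg _)
    have h3 : ‖φ ω - φ ω'‖ ≤ ‖ω - ω'‖ + ‖g (φ ω) - g (φ ω')‖ := by
      rw [e1]
      exact norm_sub_le _ _
    linarith
  have hφcont : ContinuousOn φ (ball ω₀ (h / 4)) := by
    refine (LipschitzOnWith.of_dist_le_mul (K := 3) fun ω hω ω' hω' => ?_).continuousOn
    rw [dist_eq_norm, dist_eq_norm]
    have := hφlip ω hω ω' hω'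
    push_cast
    linarith
  -- the main differentiability-with-bound step
  have main : ∀ ω ∈ ball ω₀ (h / 4), ∃ B : (Fin n → ℂ) →L[ℂ] (Fin n → ℂ),
      HasFDerivAt φ B ω ∧ (h / 4) * ‖B - 1‖ ≤ δ := by
    intro ω hω
    have hωn : ‖ω - ω₀‖ < h / 4 := mem_ball_iff_norm.1 hω
    obtain ⟨hxmem, hfx⟩ := hkey ω hω
    set x := φ ω with hxdef
    have hxhalf : ‖x - ω₀‖ < h / 2 := by
      calc ‖x - ω₀‖ ≤ ‖x - ω‖ + ‖ω - ω₀‖ := norm_sub_le_norm_sub_add_norm_sub _ _ _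
        _ < δ + h / 4 := by
            have := hφnorm ω hω
            rw [← hxdef] at this
            exact add_lt_add_of_le_of_lt this hωn
        _ ≤ h / 2 := by linarith
    have hxball : x ∈ ball ω₀ h := by
      rw [mem_ball_iff_norm]; linarith
    set A : (Fin n → ℂ) →L[ℂ] (Fin n → ℂ) := fderiv ℂ g x with hAdef
    have hA : ‖A‖ ≤ δ / (h / 2) :=
      cauchy_fderiv_bound hg hgb (by linarith) (by linarith)
    have hAh : ‖A‖ * h ≤ 2 * δ := by
      have := (le_div_iff₀ (by linarith : (0:ℝ) < h / 2)).1 hA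
      linarith
    have hA2 : ‖A‖ ≤ 1 / 2 := by nlinarith
    have hAlt : ‖-A‖ < 1 := by rw [norm_neg]; linarith
    set u : ((Fin n → ℂ) →L[ℂ] (Fin n → ℂ))ˣ := Units.oneSub (-A) hAlt with hudef
    have huval : (u : (Fin n → ℂ) →L[ℂ] (Fin n → ℂ)) = 1 + A := by
      rw [hudef]
      show (1 : (Fin n → ℂ) →L[ℂ] (Fin n → ℂ)) - (-A) = 1 + A
      rw [sub_neg_eq_add]
    set B : (Fin n → ℂ) →L[ℂ] (Fin n → ℂ) := ((u⁻¹ : _ˣ) : (Fin n → ℂ) →L[ℂ] (Fin n → ℂ))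
      with hBdef
    have hBA : ∀ z, B ((1 + A) z) = z := by
      intro z
      have h1 : ((u⁻¹ : _ˣ) : (Fin n → ℂ) →L[ℂ] (Fin n → ℂ)) * u = 1 := u.inv_mul
      calc B ((1 + A) z) = (B * (1 + A)) z := rfl
        _ = z := by rw [hBdef, ← huval, h1]; rfl
    have hAB : (1 + A) * B = 1 := by
      rw [hBdef, ← huval]
      exact u.mul_inv
    -- f has derivative 1 + A at x
    have hgdx : HasFDerivAt g A x :=
      (hg.differentiableAt (isOpen_ball.mem_nhds hxball)).hasFDerivAt
    have hfderiv : HasFDerivAt f (1 + A) x := by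
      have h1 : HasFDerivAt (fun y => y + g y) (ContinuousLinearMap.id ℂ (Fin n → ℂ) + A) x :=
        (hasFDerivAt_id x).add hgdx
      have h2 : (fun y : Fin n → ℂ => y + g y) = f := by
        funext y
        simp [hgdef]
      rw [h2] at h1
      rw [ContinuousLinearMap.one_def]
      exact h1
    -- little-o argument
    have htend : Tendsto φ (𝓝 ω) (𝓝 x) :=
      hφcont.continuousAt (isOpen_ball.mem_nhds hω)
    have herr : (fun y => f y - f x - (1 + A) (y - x)) =o[𝓝 x] fun y => y - x :=
      hfderiv.isLittleO
    have hq : (fun ω' => f (φ ω') - f x - (1 + A) (φ ω' - x)) =o[𝓝 ω] fun ω' => φ ω' - x :=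
      herr.comp_tendsto htend
    have hOφ : (fun ω' => φ ω' - x) =O[𝓝 ω] fun ω' => ω' - ω := by
      rw [isBigO_iff]
      refine ⟨3, ?_⟩
      filter_upwards [isOpen_ball.mem_nhds hω] with ω' hω'
      exact hφlip ω' hω' ω hω
    have hq2 : (fun ω' => f (φ ω') - f x - (1 + A) (φ ω' - x)) =o[𝓝 ω] fun ω' => ω' - ω :=
      hq.trans_isBigO hOφ
    have hBq : (fun ω' => -(B (f (φ ω') - f x - (1 + A) (φ ω' - x)))) =o[𝓝 ω]
        fun ω' => ω' - ω :=
      ((B.isBigO_comp _ _).trans_isLittleO hq2).neg_left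
    have key_ev : ∀ᶠ ω' in 𝓝 ω,
        -(B (f (φ ω') - f x - (1 + A) (φ ω' - x))) = φ ω' - φ ω - B (ω' - ω) := by
      filter_upwards [isOpen_ball.mem_nhds hω] with ω' hω'
      have hfφ : f (φ ω') = ω' := (hkey ω' hω').2
      rw [map_sub, map_sub, hBA, hfφ, hfx, map_sub]
      abel
    have hlo : (fun ω' => φ ω' - φ ω - B (ω' - ω)) =o[𝓝 ω] fun ω' => ω' - ω :=
      hBq.congr' key_ev EventuallyEq.rfl
    have hasB : HasFDerivAt φ B ω := hasFDerivAt_iff_isLittleO.2 hlo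
    refine ⟨B, hasB, ?_⟩
    -- norm bound
    have hB1 : B - 1 = -(A * B) := by
      have h1 : (1 : (Fin n → ℂ) →L[ℂ] (Fin n → ℂ)) = B + A * B := by
        rw [← hAB, add_mul, one_mul]
      rw [h1]
      abel
    have hnorm : ‖B - 1‖ ≤ ‖A‖ * ‖B‖ := by
      rw [hB1, norm_neg]
      exact norm_mul_le _ _
    have hBle : ‖B‖ ≤ ‖B - 1‖ + 1 := by
      have h2 : ‖(1 : (Fin n → ℂ) →L[ℂ] (Fin n → ℂ))‖ ≤ 1 := by
        rw [ContinuousLinearMap.one_def]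
        exact ContinuousLinearMap.norm_id_le
      calc ‖B‖ = ‖(B - 1) + 1‖ := by rw [sub_add_cancel]
        _ ≤ ‖B - 1‖ + ‖(1 : (Fin n → ℂ) →L[ℂ] (Fin n → ℂ))‖ := norm_add_le _ _
        _ ≤ ‖B - 1‖ + 1 := by linarith
    have ht : ‖B - 1‖ ≤ ‖A‖ * (‖B - 1‖ + 1) :=
      le_trans hnorm (mul_le_mul_of_nonneg_left hBle (norm_nonneg _))
    have h2A : ‖A‖ * ‖B - 1‖ ≤ (1 / 2) * ‖B - 1‖ :=
      mul_le_mul_of_nonneg_right hA2 (norm_nonneg _)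
    have ht2 : ‖B - 1‖ ≤ 2 * ‖A‖ := by
      rw [mul_add, mul_one] at ht
      linarith
    have hfin : h / 4 * ‖B - 1‖ ≤ h / 4 * (2 * ‖A‖) :=
      mul_le_mul_of_nonneg_left ht2 (by linarith)
    linarith [hAh]
  refine ⟨φ, ?_, ?_, ?_⟩
  · rw [hset4]
    intro ω hω
    obtain ⟨B, hB, -⟩ := main ω hω
    exact hB.differentiableAt.differentiableWithinAt
  · intro ω hω'
    have hω : ω ∈ ball ω₀ (h / 4) := by rw [← hset4]; exact hω'
    obtain ⟨hxmem, hfx⟩ := hkey ω hω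
    have hφn := hφnorm ω hω
    have hωn : ‖ω - ω₀‖ < h / 4 := mem_ball_iff_norm.1 hω
    have hfull : ‖φ ω - ω₀‖ < h := by
      calc ‖φ ω - ω₀‖ ≤ ‖φ ω - ω‖ + ‖ω - ω₀‖ := norm_sub_le_norm_sub_add_norm_sub _ _ _
        _ < δ + h / 4 := add_lt_add_of_le_of_lt hφn hωn
        _ < h := by linarith
    refine ⟨fun i => ?_, hfx, fun i => ?_⟩
    · calc ‖φ ω i - ω₀ i‖ = ‖(φ ω - ω₀) i‖ := by simp
        _ ≤ ‖φ ω - ω₀‖ := norm_le_pi_norm _ i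
        _ < h := hfull
    · calc ‖φ ω i - ω i‖ = ‖(φ ω - ω) i‖ := by simp
        _ ≤ ‖φ ω - ω‖ := norm_le_pi_norm _ i
        _ ≤ δ := hφn
  · intro ω hω'
    have hω : ω ∈ ball ω₀ (h / 4) := by rw [← hset4]; exact hω'
    obtain ⟨B, hB, hbound⟩ := main ω hω
    rw [hB.fderiv, ← ContinuousLinearMap.one_def]
    exact hbound
end

section
/- Let ω₀ ∈ R^n be non-resonant and suppose ω₀ satisfies the Bruno–Rüssmann condition ∫_1^∞ Q^{-2} ln Ψ(Q) dQ < ∞, where Ψ(Q) = sup{|k·ω₀|^{-1} : 0 < |k|₁ ≤ Q}. Define Δ(Q) = QΨ(Q) and Δ*(x) = sup{Q ≥ 1 : Δ(Q) ≤ x}. Then ∫_{Δ(1)}^∞ dx/(x Δ*(x)) < ∞. Conversely, if ∫_{Δ(1)}^∞ dx/(x Δ*(x)) < ∞ then ∫_1^∞ Q^{-2} ln Ψ(Q) dQ < ∞. -/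
open MeasureTheory Set Real Filter

lemma BR_L0 {f : ℝ → ℝ} {s : Set ℝ} (hf : IntegrableOn f s) :
    ∫⁻ x in s, ENNReal.ofReal (f x) < ⊤ :=
  (lintegral_ofReal_le_lintegral_enorm f).trans_lt hf.2

lemma BR_nonneg_iff {f : ℝ → ℝ} {s : Set ℝ} (hs : MeasurableSet s)
    (hf : Measurable f) (h0 : ∀ x ∈ s, 0 ≤ f x) :
    IntegrableOn f s ↔ ∫⁻ x in s, ENNReal.ofReal (f x) < ⊤ := by
  constructor
  · exact BR_L0
  · intro h
    refine ⟨hf.aestronglyMeasurable, ?_⟩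
    rw [hasFiniteIntegral_iff_ofReal ((ae_restrict_iff' hs).2 (Eventually.of_forall h0))]
    exact h

lemma BR_L1 {a b : ℝ} (ha : 0 < a) (hab : a ≤ b) :
    ∫⁻ x in Set.Ioc a b, ENNReal.ofReal x⁻¹ = ENNReal.ofReal (Real.log b - Real.log a) := by
  have hb : 0 < b := ha.trans_le hab
  have hint : IntegrableOn (fun x : ℝ => x⁻¹) (Set.Ioc a b) := by
    apply (ContinuousOn.integrableOn_Icc ?_).mono_set Set.Ioc_subset_Icc_self
    exact continuousOn_inv₀.mono (fun x hx => ne_of_gt (ha.trans_le hx.1))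
  rw [← ofReal_integral_eq_lintegral_ofReal hint
    ((ae_restrict_iff' measurableSet_Ioc).2 (Eventually.of_forall
      (fun x hx => inv_nonneg.2 (le_of_lt (ha.trans hx.1)))))]
  congr 1
  rw [← intervalIntegral.integral_of_le hab, integral_inv_of_pos ha hb, Real.log_div hb.ne' ha.ne']


lemma BR_rpow {x : ℝ} (hx : 0 < x) : x ^ (-2 : ℝ) = x⁻¹ ^ 2 := by
  rw [Real.rpow_neg hx.le, inv_pow]
  congr 1
  rw [← Real.rpow_natCast x 2]
  norm_num

lemma BR_L2int {c : ℝ} (hc : 0 < c) :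
    IntegrableOn (fun Q : ℝ => Q⁻¹ ^ 2) (Set.Ioi c) := by
  have := integrableOn_Ioi_rpow_of_lt (a := -2) (by norm_num) hc
  apply this.congr_fun ?_ measurableSet_Ioi
  intro x hx
  exact BR_rpow (hc.trans hx)

lemma BR_L2 {c : ℝ} (hc : 0 < c) :
    ∫⁻ Q in Set.Ioi c, ENNReal.ofReal (Q⁻¹ ^ 2) = ENNReal.ofReal c⁻¹ := by
  rw [← ofReal_integral_eq_lintegral_ofReal (BR_L2int hc)
    ((ae_restrict_iff' measurableSet_Ioi).2 (Eventually.of_forall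
      (fun x _ => by positivity)))]
  congr 1
  have : ∫ Q in Set.Ioi c, Q⁻¹ ^ 2 = ∫ Q in Set.Ioi c, Q ^ (-2 : ℝ) := by
    apply setIntegral_congr_fun measurableSet_Ioi
    intro x hx
    exact (BR_rpow (hc.trans hx)).symm
  rw [this, integral_Ioi_rpow_of_lt (by norm_num) hc]
  rw [show (-2 : ℝ) + 1 = -1 by norm_num, Real.rpow_neg_one]
  field_simp

lemma BR_L3 : ∫⁻ Q in Set.Ioi (1:ℝ), ENNReal.ofReal (Q⁻¹ ^ 2 * Real.log Q) < ⊤ := by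
  have hint : IntegrableOn (fun Q : ℝ => 2 * Q ^ (-(3/2) : ℝ)) (Set.Ioi (1:ℝ)) :=
    (integrableOn_Ioi_rpow_of_lt (by norm_num) one_pos).const_mul 2
  refine lt_of_le_of_lt ?_ (BR_L0 hint)
  apply lintegral_mono_ae
  refine (ae_restrict_iff' measurableSet_Ioi).2 (Eventually.of_forall (fun Q hQ => ?_))
  apply ENNReal.ofReal_le_ofReal
  have hQ1 : (1:ℝ) < Q := hQ
  have hQ0 : (0:ℝ) < Q := one_pos.trans hQ1
  have hlog : Real.log Q ≤ 2 * Q ^ ((1:ℝ)/2) := by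
    have h1 : Real.log (Q ^ ((1:ℝ)/2)) = (1/2) * Real.log Q := Real.log_rpow hQ0 _
    have h2 : Real.log (Q ^ ((1:ℝ)/2)) ≤ Q ^ ((1:ℝ)/2) - 1 :=
      Real.log_le_sub_one_of_pos (Real.rpow_pos_of_pos hQ0 _)
    nlinarith [Real.rpow_pos_of_pos hQ0 ((1:ℝ)/2)]
  have h3 : Q⁻¹ ^ 2 = Q ^ (-2 : ℝ) := (BR_rpow hQ0).symm
  calc Q⁻¹ ^ 2 * Real.log Q ≤ Q ^ (-2:ℝ) * (2 * Q ^ ((1:ℝ)/2)) := by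
        rw [h3]; exact mul_le_mul_of_nonneg_left hlog (Real.rpow_nonneg hQ0.le _)
    _ = 2 * Q ^ (-(3/2) : ℝ) := by
        rw [mul_comm (Q ^ (-2:ℝ)), mul_assoc, ← Real.rpow_add hQ0]
        norm_num

set_option maxHeartbeats 1000000 in
theorem BR_aux (Ψ : ℝ → ℝ) (hmono : Monotone Ψ) (hpos : 0 < Ψ 1) :
    IntegrableOn (fun Q => Q⁻¹ ^ 2 * Real.log (Ψ Q)) (Set.Ioi (1:ℝ)) ↔
    IntegrableOn (fun x => (x * sSup {Q : ℝ | 1 ≤ Q ∧ Q * Ψ Q ≤ x})⁻¹) (Set.Ioi (Ψ 1)) := by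
  set Δ : ℝ → ℝ := fun Q => Q * Ψ Q with hΔdef
  set Δs : ℝ → ℝ := fun x => sSup {Q : ℝ | 1 ≤ Q ∧ Δ Q ≤ x} with hΔsdef
  have hΨmeas : Measurable Ψ := hmono.measurable
  have hΨQpos : ∀ Q, 1 ≤ Q → 0 < Ψ Q := fun Q h => hpos.trans_le (hmono h)
  have hΔmono : ∀ a b : ℝ, 1 ≤ a → a < b → Δ a < Δ b := by
    intro a b ha hab
    have h1 : a * Ψ a ≤ a * Ψ b := mul_le_mul_of_nonneg_left (hmono hab.le) (by linarith)
    have h2 : a * Ψ b < b * Ψ b :=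
      mul_lt_mul_of_pos_right hab (hΨQpos b (ha.trans hab.le))
    exact h1.trans_lt h2
  have hΔge : ∀ Q : ℝ, 1 ≤ Q → Ψ 1 ≤ Δ Q := by
    intro Q hQ
    calc Ψ 1 ≤ Ψ Q := hmono hQ
      _ ≤ Q * Ψ Q := le_mul_of_one_le_left (hΨQpos Q hQ).le hQ
  have hΔ1 : Δ 1 = Ψ 1 := one_mul _
  have hTmem : ∀ x : ℝ, Ψ 1 ≤ x → (1:ℝ) ∈ {Q : ℝ | 1 ≤ Q ∧ Δ Q ≤ x} := by
    intro x hx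
    exact ⟨le_rfl, by rw [hΔ1]; exact hx⟩
  have hTbdd : ∀ x : ℝ, BddAbove {Q : ℝ | 1 ≤ Q ∧ Δ Q ≤ x} := by
    intro x
    refine ⟨x / Ψ 1, fun Q hQ => ?_⟩
    rw [le_div_iff₀ hpos]
    calc Q * Ψ 1 ≤ Q * Ψ Q := mul_le_mul_of_nonneg_left (hmono hQ.1) (by linarith [hQ.1])
      _ ≤ x := hQ.2
  have hΔs1 : ∀ x : ℝ, Ψ 1 ≤ x → 1 ≤ Δs x := fun x hx => le_csSup (hTbdd x) (hTmem x hx)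
  have hΔsmono : Monotone Δs := by
    intro a b hab
    rcases le_or_gt (Ψ 1) a with h | h
    · exact csSup_le_csSup (hTbdd b) ⟨1, hTmem a h⟩
        (fun Q hQ => ⟨hQ.1, hQ.2.trans hab⟩)
    · have he : {Q : ℝ | 1 ≤ Q ∧ Δ Q ≤ a} = ∅ := by
        ext Q
        simp only [Set.mem_setOf_eq, Set.mem_empty_iff_false, iff_false, not_and]
        intro hQ hle
        exact absurd ((hΔge Q hQ).trans hle) (not_le.2 h)
      show sSup _ ≤ sSup _
      rw [he, Real.sSup_empty]
      exact Real.sSup_nonneg (fun Q hQ => by linarith [hQ.1])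
  have hΔsmeas : Measurable Δs := hΔsmono.measurable
  have hΔmeas : Measurable Δ := measurable_id.mul hΨmeas
  -- the kernel of the Tonelli argument
  set F : ℝ × ℝ → ENNReal := fun p =>
    Set.indicator {p : ℝ × ℝ | 1 < p.1 ∧ Ψ 1 < p.2 ∧ p.2 ≤ Δ p.1}
      (fun p => ENNReal.ofReal (p.1⁻¹ ^ 2) * ENNReal.ofReal p.2⁻¹) p with hFdef
  have hsetmeas : MeasurableSet {p : ℝ × ℝ | 1 < p.1 ∧ Ψ 1 < p.2 ∧ p.2 ≤ Δ p.1} := by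
    have h1 : MeasurableSet {p : ℝ × ℝ | 1 < p.1} := measurable_fst measurableSet_Ioi
    have h2 : MeasurableSet {p : ℝ × ℝ | Ψ 1 < p.2} := measurable_snd measurableSet_Ioi
    have h3 : MeasurableSet {p : ℝ × ℝ | p.2 ≤ Δ p.1} :=
      measurableSet_le measurable_snd (hΔmeas.comp measurable_fst)
    exact ((h2.inter h3).inter h1).congr (by ext p; simp [Set.mem_setOf_eq]; tauto)
  have hFmeas : Measurable F := by
    apply Measurable.indicator _ hsetmeas
    exact ((measurable_fst.inv.pow_const 2).ennreal_ofReal).mul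
      (measurable_snd.inv.ennreal_ofReal)
  have eq1 : ∫⁻ Q, ∫⁻ x, F (Q, x) =
      ∫⁻ Q in Set.Ioi (1:ℝ), ENNReal.ofReal (Q⁻¹ ^ 2) *
        ENNReal.ofReal (Real.log (Δ Q) - Real.log (Ψ 1)) := by
    rw [← lintegral_indicator measurableSet_Ioi]
    apply lintegral_congr
    intro Q
    by_cases hQ : Q ∈ Set.Ioi (1:ℝ)
    · rw [Set.indicator_of_mem hQ]
      have hQ1 : (1:ℝ) < Q := hQ
      have hpt : ∀ x, F (Q, x) = Set.indicator (Set.Ioc (Ψ 1) (Δ Q))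
          (fun x => ENNReal.ofReal (Q⁻¹ ^ 2) * ENNReal.ofReal x⁻¹) x := by
        intro x
        by_cases hx : x ∈ Set.Ioc (Ψ 1) (Δ Q)
        · rw [Set.indicator_of_mem hx]
          exact Set.indicator_of_mem (show (Q, x) ∈ {p : ℝ × ℝ | 1 < p.1 ∧ Ψ 1 < p.2 ∧ p.2 ≤ Δ p.1} from ⟨hQ1, hx.1, hx.2⟩) _
        · rw [Set.indicator_of_notMem hx]
          exact Set.indicator_of_notMem (show (Q, x) ∉ {p : ℝ × ℝ | 1 < p.1 ∧ Ψ 1 < p.2 ∧ p.2 ≤ Δ p.1} from fun h => hx ⟨h.2.1, h.2.2⟩) _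
      rw [lintegral_congr hpt, lintegral_indicator measurableSet_Ioc,
        lintegral_const_mul' _ _ ENNReal.ofReal_ne_top, BR_L1 hpos (hΔge Q hQ1.le)]
    · rw [Set.indicator_of_notMem hQ]
      have hpt : ∀ x, F (Q, x) = 0 := fun x =>
        Set.indicator_of_notMem (show (Q, x) ∉ {p : ℝ × ℝ | 1 < p.1 ∧ Ψ 1 < p.2 ∧ p.2 ≤ Δ p.1} from fun h => hQ h.1) _
      rw [lintegral_congr hpt, lintegral_zero]
  have eq2 : ∫⁻ x, ∫⁻ Q, F (Q, x) =
      ∫⁻ x in Set.Ioi (Ψ 1), ENNReal.ofReal x⁻¹ * ENNReal.ofReal (Δs x)⁻¹ := by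
    rw [← lintegral_indicator measurableSet_Ioi]
    apply lintegral_congr
    intro x
    by_cases hx : x ∈ Set.Ioi (Ψ 1)
    · rw [Set.indicator_of_mem hx]
      have hx1 : Ψ 1 < x := hx
      set S : Set ℝ := {Q : ℝ | 1 < Q ∧ x ≤ Δ Q} with hSdef
      have hSmeas : MeasurableSet S := by
        have : S = Set.Ioi 1 ∩ {Q : ℝ | x ≤ Δ Q} := rfl
        rw [this]
        exact measurableSet_Ioi.inter (measurableSet_le measurable_const hΔmeas)
      have hpt : ∀ Q, F (Q, x) = Set.indicator S
          (fun Q => ENNReal.ofReal (Q⁻¹ ^ 2) * ENNReal.ofReal x⁻¹) Q := by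
        intro Q
        by_cases hQ : Q ∈ S
        · rw [Set.indicator_of_mem hQ]
          exact Set.indicator_of_mem (show (Q, x) ∈ {p : ℝ × ℝ | 1 < p.1 ∧ Ψ 1 < p.2 ∧ p.2 ≤ Δ p.1} from ⟨hQ.1, hx1, hQ.2⟩) _
        · rw [Set.indicator_of_notMem hQ]
          exact Set.indicator_of_notMem (show (Q, x) ∉ {p : ℝ × ℝ | 1 < p.1 ∧ Ψ 1 < p.2 ∧ p.2 ≤ Δ p.1} from fun h => hQ ⟨h.1, h.2.2⟩) _
      have hsub1 : Set.Ioi (Δs x) ⊆ S := by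
        intro Q hQ
        have h1 : 1 < Q := lt_of_le_of_lt (hΔs1 x hx1.le) hQ
        refine ⟨h1, ?_⟩
        by_contra hcon
        have : Q ≤ Δs x := le_csSup (hTbdd x) ⟨h1.le, le_of_not_ge hcon⟩
        exact absurd hQ (not_lt.2 this)
      have hsub2 : S ⊆ Set.Ici (Δs x) := by
        intro Q hQ
        by_contra hcon
        obtain ⟨Q', hQ'mem, hQQ'⟩ := exists_lt_of_lt_csSup ⟨1, hTmem x hx1.le⟩
          (not_le.1 hcon)
        exact absurd hQ.2 (not_le.2 ((hΔmono Q Q' hQ.1.le hQQ').trans_le hQ'mem.2))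
      have hae : S =ᵐ[volume] Set.Ioi (Δs x) := by
        rw [MeasureTheory.ae_eq_set]
        constructor
        · apply measure_mono_null (t := {Δs x}) ?_ (measure_singleton _)
          rintro Q ⟨hQS, hQn⟩
          exact Set.mem_singleton_iff.2 (le_antisymm (not_lt.1 hQn) (hsub2 hQS))
        · rw [Set.diff_eq_empty.2 hsub1, measure_empty]
      rw [lintegral_congr hpt, lintegral_indicator hSmeas,
        Measure.restrict_congr_set hae,
        lintegral_mul_const' _ _ ENNReal.ofReal_ne_top,
        BR_L2 (lt_of_lt_of_le one_pos (hΔs1 x hx1.le)), mul_comm]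
    · rw [Set.indicator_of_notMem hx]
      have hpt : ∀ Q, F (Q, x) = 0 := fun Q =>
        Set.indicator_of_notMem (show (Q, x) ∉ {p : ℝ × ℝ | 1 < p.1 ∧ Ψ 1 < p.2 ∧ p.2 ≤ Δ p.1} from fun h => hx h.2.1) _
      rw [lintegral_congr hpt, lintegral_zero]
  have swap : ∫⁻ Q, ∫⁻ x, F (Q, x) = ∫⁻ x, ∫⁻ Q, F (Q, x) :=
    lintegral_lintegral_swap hFmeas.aemeasurable
  have key : (∫⁻ Q in Set.Ioi (1:ℝ), ENNReal.ofReal (Q⁻¹ ^ 2) *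
        ENNReal.ofReal (Real.log (Δ Q) - Real.log (Ψ 1))) =
      ∫⁻ x in Set.Ioi (Ψ 1), ENNReal.ofReal x⁻¹ * ENNReal.ofReal (Δs x)⁻¹ := by
    rw [← eq1, ← eq2, swap]
  -- left-hand side reduction
  have hhmeas : Measurable (fun Q : ℝ => Q⁻¹ ^ 2 * (Real.log (Ψ Q) - Real.log (Ψ 1))) :=
    (measurable_id.inv.pow_const 2).mul
      ((Real.measurable_log.comp hΨmeas).sub measurable_const)
  have hh0 : ∀ Q ∈ Set.Ioi (1:ℝ), 0 ≤ Q⁻¹ ^ 2 * (Real.log (Ψ Q) - Real.log (Ψ 1)) := by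
    intro Q hQ
    have h1 : Real.log (Ψ 1) ≤ Real.log (Ψ Q) :=
      Real.log_le_log hpos (hmono (le_of_lt hQ))
    have h2 : (0:ℝ) ≤ Q⁻¹ ^ 2 := by positivity
    nlinarith
  have hint2 : IntegrableOn (fun Q : ℝ => Real.log (Ψ 1) * Q⁻¹ ^ 2) (Set.Ioi (1:ℝ)) :=
    (BR_L2int one_pos).const_mul _
  have left1 : IntegrableOn (fun Q => Q⁻¹ ^ 2 * Real.log (Ψ Q)) (Set.Ioi (1:ℝ)) ↔
      IntegrableOn (fun Q : ℝ => Q⁻¹ ^ 2 * (Real.log (Ψ Q) - Real.log (Ψ 1)))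
        (Set.Ioi (1:ℝ)) := by
    constructor
    · intro H
      apply MeasureTheory.IntegrableOn.congr_fun (H.sub hint2) ?_ measurableSet_Ioi
      intro Q _
      simp only [Pi.sub_apply]
      ring
    · intro H
      apply MeasureTheory.IntegrableOn.congr_fun (H.add hint2) ?_ measurableSet_Ioi
      intro Q _
      simp only [Pi.add_apply]
      ring
  have left2 : IntegrableOn (fun Q : ℝ => Q⁻¹ ^ 2 * (Real.log (Ψ Q) - Real.log (Ψ 1)))
      (Set.Ioi (1:ℝ)) ↔
      (∫⁻ Q in Set.Ioi (1:ℝ),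
        ENNReal.ofReal (Q⁻¹ ^ 2 * (Real.log (Ψ Q) - Real.log (Ψ 1)))) < ⊤ :=
    BR_nonneg_iff measurableSet_Ioi hhmeas hh0
  have left3 : (∫⁻ Q in Set.Ioi (1:ℝ), ENNReal.ofReal (Q⁻¹ ^ 2) *
        ENNReal.ofReal (Real.log (Δ Q) - Real.log (Ψ 1))) =
      (∫⁻ Q in Set.Ioi (1:ℝ), ENNReal.ofReal (Q⁻¹ ^ 2 * Real.log Q)) +
      ∫⁻ Q in Set.Ioi (1:ℝ),
        ENNReal.ofReal (Q⁻¹ ^ 2 * (Real.log (Ψ Q) - Real.log (Ψ 1))) := by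
    rw [← lintegral_add_left (f := fun Q : ℝ => ENNReal.ofReal (Q⁻¹ ^ 2 * Real.log Q))
      ((measurable_inv.pow_const 2).mul Real.measurable_log).ennreal_ofReal]
    apply setLIntegral_congr_fun measurableSet_Ioi
    refine (fun Q hQ => ?_)
    beta_reduce
    have hQ1 : (1:ℝ) < Q := hQ
    have hQ0 : (0:ℝ) < Q := one_pos.trans hQ1
    have hΨp : 0 < Ψ Q := hΨQpos Q hQ1.le
    have hlog : Real.log (Δ Q) = Real.log Q + Real.log (Ψ Q) :=
      Real.log_mul hQ0.ne' hΨp.ne'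
    have h1 : Real.log (Ψ 1) ≤ Real.log (Ψ Q) := Real.log_le_log hpos (hmono hQ1.le)
    have h2 : (0:ℝ) ≤ Real.log Q := Real.log_nonneg hQ1.le
    rw [hlog, ← ENNReal.ofReal_mul (by positivity : (0:ℝ) ≤ Q⁻¹ ^ 2),
      show Q⁻¹ ^ 2 * (Real.log Q + Real.log (Ψ Q) - Real.log (Ψ 1)) =
        Q⁻¹ ^ 2 * Real.log Q + Q⁻¹ ^ 2 * (Real.log (Ψ Q) - Real.log (Ψ 1)) by ring,
      ENNReal.ofReal_add (by positivity) (by nlinarith [sq_nonneg Q⁻¹])]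
  have leftfin : IntegrableOn (fun Q => Q⁻¹ ^ 2 * Real.log (Ψ Q)) (Set.Ioi (1:ℝ)) ↔
      (∫⁻ Q in Set.Ioi (1:ℝ), ENNReal.ofReal (Q⁻¹ ^ 2) *
        ENNReal.ofReal (Real.log (Δ Q) - Real.log (Ψ 1))) < ⊤ := by
    rw [left1, left2, left3, ENNReal.add_lt_top]
    exact (and_iff_right BR_L3).symm
  -- right-hand side reduction
  have rmeas : Measurable (fun x : ℝ => (x * Δs x)⁻¹) := (measurable_id.mul hΔsmeas).inv
  have r0 : ∀ x ∈ Set.Ioi (Ψ 1), 0 ≤ (x * Δs x)⁻¹ := by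
    intro x hx
    have hx0 : (0:ℝ) < x := hpos.trans hx
    have h1 : (0:ℝ) ≤ Δs x := le_trans zero_le_one (hΔs1 x (le_of_lt hx))
    positivity
  have right1 : IntegrableOn (fun x : ℝ => (x * Δs x)⁻¹) (Set.Ioi (Ψ 1)) ↔
      (∫⁻ x in Set.Ioi (Ψ 1), ENNReal.ofReal ((x * Δs x)⁻¹)) < ⊤ :=
    BR_nonneg_iff measurableSet_Ioi rmeas r0
  have right2 : (∫⁻ x in Set.Ioi (Ψ 1), ENNReal.ofReal ((x * Δs x)⁻¹)) =
      ∫⁻ x in Set.Ioi (Ψ 1), ENNReal.ofReal x⁻¹ * ENNReal.ofReal (Δs x)⁻¹ := by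
    apply setLIntegral_congr_fun measurableSet_Ioi
    refine (fun x hx => ?_)
    beta_reduce
    have hx0 : (0:ℝ) < x := hpos.trans hx
    rw [mul_inv, ENNReal.ofReal_mul (by positivity : (0:ℝ) ≤ x⁻¹)]
  have goal_eq : (fun x : ℝ => (x * sSup {Q : ℝ | 1 ≤ Q ∧ Q * Ψ Q ≤ x})⁻¹) =
      (fun x : ℝ => (x * Δs x)⁻¹) := by
    simp only [hΔsdef, hΔdef]
  rw [goal_eq, leftfin, right1, right2, key]


/-- equivalence of the Bruno–Rüssmann condition
`∫_1^∞ Q⁻² ln Ψ(Q) dQ < ∞` with the condition `∫_{Δ(1)}^∞ dx/(x Δ*(x)) < ∞`,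
where `Ψ(Q) = sup{|k·ω₀|⁻¹ : 0 < |k|₁ ≤ Q}` for a non-resonant `ω₀`,
`Δ(Q) = QΨ(Q)` and `Δ*(x) = sup{Q ≥ 1 : Δ(Q) ≤ x}`. -/
theorem stmt11 (n : ℕ) (hn : 1 ≤ n) (ω : Fin n → ℝ)
    (hres : ∀ k : Fin n → ℤ, (∑ i, (k i : ℝ) * ω i) = 0 → k = 0)
    (Ψ Δ Δs : ℝ → ℝ)
    (hΨ : ∀ Q, Ψ Q = sSup {x : ℝ | ∃ k : Fin n → ℤ, k ≠ 0 ∧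
      ((∑ i, |k i| : ℤ) : ℝ) ≤ Q ∧ x = |∑ i, (k i : ℝ) * ω i|⁻¹})
    (hΔ : ∀ Q, Δ Q = Q * Ψ Q)
    (hΔs : ∀ x, Δs x = sSup {Q : ℝ | 1 ≤ Q ∧ Δ Q ≤ x}) :
    MeasureTheory.IntegrableOn (fun Q => Q⁻¹ ^ 2 * Real.log (Ψ Q)) (Set.Ioi (1:ℝ)) ↔
    MeasureTheory.IntegrableOn (fun x => (x * Δs x)⁻¹) (Set.Ioi (Δ 1)) := by
  have i0 : Fin n := ⟨0, hn⟩
  set e : Fin n → ℤ := fun i => if i = i0 then 1 else 0 with he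
  have he0 : e ≠ 0 := by
    intro h
    have := congrFun h i0
    simp [he] at this
  have hesum : ((∑ i, |e i| : ℤ) : ℝ) = 1 := by
    have : ∀ i, |e i| = if i = i0 then 1 else 0 := by
      intro i
      simp only [he]
      split <;> simp
    rw [show (∑ i, |e i| : ℤ) = ∑ i, if i = i0 then 1 else 0 from
      Finset.sum_congr rfl (fun i _ => this i)]
    simp
  have hedot : (∑ i, (e i : ℝ) * ω i) = ω i0 := by
    rw [show (∑ i, (e i : ℝ) * ω i) = ∑ i, if i = i0 then ω i else 0 from
      Finset.sum_congr rfl (fun i _ => by simp only [he]; split <;> simp)]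
    simp
  have hω0 : ω i0 ≠ 0 := by
    intro h
    exact he0 (hres e (by rw [hedot, h]))
  have hmemS : ∀ Q : ℝ, 1 ≤ Q → |ω i0|⁻¹ ∈ {x : ℝ | ∃ k : Fin n → ℤ, k ≠ 0 ∧
      ((∑ i, |k i| : ℤ) : ℝ) ≤ Q ∧ x = |∑ i, (k i : ℝ) * ω i|⁻¹} := by
    intro Q hQ
    exact ⟨e, he0, by rw [hesum]; exact hQ, by rw [hedot]⟩
  have hbdd : ∀ Q : ℝ, BddAbove {x : ℝ | ∃ k : Fin n → ℤ, k ≠ 0 ∧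
      ((∑ i, |k i| : ℤ) : ℝ) ≤ Q ∧ x = |∑ i, (k i : ℝ) * ω i|⁻¹} := by
    intro Q
    apply Set.Finite.bddAbove
    have hfin : (Set.pi Set.univ fun _ : Fin n => Set.Icc (-⌈Q⌉) ⌈Q⌉).Finite :=
      Set.Finite.pi (fun _ => Set.finite_Icc _ _)
    apply (hfin.image (fun k => |∑ i, (k i : ℝ) * ω i|⁻¹)).subset
    rintro x ⟨k, hk0, hkQ, rfl⟩
    refine ⟨k, Set.mem_univ_pi.2 fun i => ?_, rfl⟩
    have h1 : |k i| ≤ ∑ j, |k j| :=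
      Finset.single_le_sum (f := fun j => |k j|) (fun j _ => abs_nonneg _)
        (Finset.mem_univ i)
    have h2 : ((|k i| : ℤ) : ℝ) ≤ (⌈Q⌉ : ℝ) := by
      calc ((|k i| : ℤ) : ℝ) ≤ ((∑ j, |k j| : ℤ) : ℝ) := by exact_mod_cast h1
        _ ≤ Q := hkQ
        _ ≤ (⌈Q⌉ : ℝ) := Int.le_ceil Q
    have h3 : |k i| ≤ ⌈Q⌉ := by exact_mod_cast h2
    exact Set.mem_Icc.2 (abs_le.1 h3)
  have hempty : ∀ Q : ℝ, Q < 1 → {x : ℝ | ∃ k : Fin n → ℤ, k ≠ 0 ∧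
      ((∑ i, |k i| : ℤ) : ℝ) ≤ Q ∧ x = |∑ i, (k i : ℝ) * ω i|⁻¹} = ∅ := by
    intro Q hQ
    ext x
    simp only [Set.mem_setOf_eq, Set.mem_empty_iff_false, iff_false]
    rintro ⟨k, hk0, hkQ, rfl⟩
    obtain ⟨i, hi⟩ := Function.ne_iff.1 hk0
    have h1 : (1:ℤ) ≤ |k i| := Int.one_le_abs (by simpa using hi)
    have h2 : |k i| ≤ ∑ j, |k j| :=
      Finset.single_le_sum (f := fun j => |k j|) (fun j _ => abs_nonneg _)
        (Finset.mem_univ i)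
    have : (1:ℝ) ≤ Q := by
      calc (1:ℝ) ≤ ((∑ j, |k j| : ℤ) : ℝ) := by exact_mod_cast h1.trans h2
        _ ≤ Q := hkQ
    linarith
  have hpos : 0 < Ψ 1 := by
    rw [hΨ 1]
    exact lt_of_lt_of_le (inv_pos.2 (abs_pos.2 hω0)) (le_csSup (hbdd 1) (hmemS 1 le_rfl))
  have hmono : Monotone Ψ := by
    intro a b hab
    rcases lt_or_ge a 1 with h | h
    · rw [hΨ a, hempty a h, Real.sSup_empty, hΨ b]
      apply Real.sSup_nonneg
      rintro x ⟨k, _, _, rfl⟩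
      positivity
    · rw [hΨ a, hΨ b]
      exact csSup_le_csSup (hbdd b) ⟨_, hmemS a h⟩
        (fun x hx => by
          obtain ⟨k, h1, h2, h3⟩ := hx
          exact ⟨k, h1, h2.trans hab, h3⟩)
  have hΔ1 : Δ 1 = Ψ 1 := by rw [hΔ, one_mul]
  have hDs : (fun x => (x * Δs x)⁻¹) =
      fun x => (x * sSup {Q : ℝ | 1 ≤ Q ∧ Q * Ψ Q ≤ x})⁻¹ := by
    funext x
    rw [hΔs]
    simp only [hΔ]
  rw [hΔ1, hDs]
  exact BR_aux Ψ hmono hpos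
end

section
/- Let v ∈ Q^n be a rational vector of denominator q (qv ∈ Z^n). For functions F, P : T^n × R^n → R (θ ∈ T^n, I ∈ R^n) that are C¹, set N_v(I) = e + v·I for a constant e, [P]_v(I,θ) = ∫_0^1 P(I, θ + t q v) dt, and F(I,θ) = q ∫_0^1 (P − [P]_v)(I, θ + t q v) t dt. Then the Poisson bracket equation {F, N_v} = P − [P]_v holds, where {F, N_v} = ∂_θ F · ∂_I N_v − ∂_I F · ∂_θ N_v = ∂_θ F · v. -/
open MeasureTheory intervalIntegral Metric
set_option maxHeartbeats 2000000
set_option synthInstance.maxHeartbeats 400000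

lemma paramDeriv {n : ℕ} {f : (Fin n → ℝ) → ℝ} (hf : ContDiff ℝ 1 f)
    (w : Fin n → ℝ) (c : ℝ → ℝ) (hc : Continuous c) (θ : Fin n → ℝ) :
    HasFDerivAt (fun x => ∫ t in (0:ℝ)..1, f (x + t • w) * c t)
      (∫ t in (0:ℝ)..1, c t • fderiv ℝ f (θ + t • w)) θ := by
  have hfd : Differentiable ℝ f := hf.differentiable one_ne_zero
  have hfc : Continuous f := hf.continuous
  have hDc : Continuous (fderiv ℝ f) := hf.continuous_fderiv one_ne_zero
  obtain ⟨M, hM⟩ : ∃ M, ∀ y ∈ closedBall θ (1 + ‖w‖), ‖fderiv ℝ f y‖ ≤ M :=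
    (isCompact_closedBall _ _).exists_bound_of_continuousOn hDc.continuousOn
  obtain ⟨C, hC⟩ : ∃ C, ∀ t ∈ Set.uIcc (0:ℝ) 1, ‖c t‖ ≤ C :=
    isCompact_uIcc.exists_bound_of_continuousOn hc.continuousOn
  have hM0 : 0 ≤ M := le_trans (norm_nonneg _) (hM θ (mem_closedBall_self (by positivity)))
  have hC0 : 0 ≤ C := le_trans (norm_nonneg _) (hC 0 Set.left_mem_uIcc)
  have hmem : ∀ t ∈ Set.uIoc (0:ℝ) 1, ∀ x ∈ ball θ 1, x + t • w ∈ closedBall θ (1 + ‖w‖) := by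
    intro t ht x hx
    rw [Set.uIoc_of_le zero_le_one] at ht
    have h1 : ‖x + t • w - θ‖ ≤ ‖x - θ‖ + ‖t • w‖ := by
      have : x + t • w - θ = (x - θ) + t • w := by abel
      rw [this]; exact norm_add_le _ _
    have h2 : ‖t • w‖ ≤ ‖w‖ := by
      rw [norm_smul]
      calc ‖t‖ * ‖w‖ ≤ 1 * ‖w‖ := by
            apply mul_le_mul_of_nonneg_right _ (norm_nonneg _)
            rw [Real.norm_eq_abs, abs_le]; exact ⟨by linarith [ht.1.le], ht.2⟩
        _ = ‖w‖ := one_mul _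
    have h3 := mem_ball_iff_norm.mp hx
    exact mem_closedBall_iff_norm.mpr (by linarith)
  have hdiff : ∀ t : ℝ, ∀ x : Fin n → ℝ,
      HasFDerivAt (fun y => f (y + t • w) * c t) (c t • fderiv ℝ f (x + t • w)) x := by
    intro t x
    have h1 : HasFDerivAt (fun y : Fin n → ℝ => y + t • w)
        (ContinuousLinearMap.id ℝ (Fin n → ℝ)) x := (hasFDerivAt_id x).add_const _
    have h2 := ((hfd (x + t • w)).hasFDerivAt.comp x h1)
    rw [ContinuousLinearMap.comp_id] at h2
    exact h2.mul_const (c t)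
  have := (intervalIntegral.hasFDerivAt_integral_of_dominated_of_fderiv_le
    (F := fun x t => f (x + t • w) * c t)
    (F' := fun x t => c t • fderiv ℝ f (x + t • w))
    (bound := fun _ => C * M) (a := 0) (b := 1) (μ := volume) (x₀ := θ)
    (s := ball θ 1) (ball_mem_nhds θ one_pos)
    (Filter.Eventually.of_forall fun x =>
      ((hfc.comp (continuous_const.add (continuous_id.smul continuous_const))).mul hc).aestronglyMeasurable)
    (((hfc.comp (continuous_const.add (continuous_id.smul continuous_const))).mul hc).intervalIntegrable 0 1)
    ((hc.smul (hDc.comp (continuous_const.add (continuous_id.smul continuous_const)))).aestronglyMeasurable)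
    (MeasureTheory.ae_of_all _ (fun t ht x hx => by
      show ‖c t • fderiv ℝ f (x + t • w)‖ ≤ C * M
      rw [norm_smul]
      exact mul_le_mul (hC t (Set.uIoc_subset_uIcc ht)) (hM _ (hmem t ht x hx))
        (norm_nonneg _) hC0))
    (intervalIntegrable_const)
    (MeasureTheory.ae_of_all _ (fun t ht x hx => hdiff t x)))
  exact this



/-- with `N_v(I) = e + v·I`, `[P]_v` the average of `P` along the
`q`-periodic orbit of the rational vector `v`, and
`F(I,θ) = q ∫_0^1 (P - [P]_v)(I, θ + t q v) t dt`, the Poisson bracket equation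
`{F, N_v} = ∂_θ F · ∂_I N_v - ∂_I F · ∂_θ N_v = P - [P]_v` holds
(`unit i = Pi.single i 1` are the coordinate directions). -/
theorem stmt12 (n : ℕ) (v : Fin n → ℝ) (q : ℕ) (hq : 1 ≤ q)
    (hv : ∀ i, ∃ m : ℤ, (q : ℝ) * v i = (m : ℝ))
    (e : ℝ) (N : (Fin n → ℝ) → ℝ) (hN : ∀ I, N I = e + ∑ i, v i * I i)
    (P : (Fin n → ℝ) → (Fin n → ℝ) → ℝ)
    (hP : ContDiff ℝ 1 (fun z : (Fin n → ℝ) × (Fin n → ℝ) => P z.1 z.2))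
    (hper : ∀ (I θ : Fin n → ℝ) (k : Fin n → ℤ), P I (θ + fun i => (k i : ℝ)) = P I θ)
    (Pavg F : (Fin n → ℝ) → (Fin n → ℝ) → ℝ)
    (hPavg : ∀ I θ, Pavg I θ = ∫ t in (0:ℝ)..1, P I (θ + (t * q) • v))
    (hF : ∀ I θ, F I θ = (q : ℝ) *
      ∫ t in (0:ℝ)..1, (P I (θ + (t * q) • v) - Pavg I (θ + (t * q) • v)) * t)
    (unit : Fin n → Fin n → ℝ) (hunit : ∀ i, unit i = Pi.single i 1) :
    ∀ I θ : Fin n → ℝ,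
      (∑ i, (fderiv ℝ (fun θ' => F I θ') θ (unit i) *
               fderiv ℝ (fun I' => N I') I (unit i)
           - fderiv ℝ (fun I' => F I' θ) I (unit i) *
               fderiv ℝ (fun _ : Fin n → ℝ => N I) θ (unit i))) =
        P I θ - Pavg I θ := by
  intro I θ
  -- the function f = P I and the period vector w
  set f : (Fin n → ℝ) → ℝ := fun x => P I x with hf_def
  have hfC : ContDiff ℝ 1 f :=
    by have := hP.comp (ContDiff.prodMk (contDiff_const (c := I)) (contDiff_id (𝕜 := ℝ) (E := Fin n → ℝ))); exact this
  have hfd : Differentiable ℝ f := hfC.differentiable one_ne_zero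
  have hfc : Continuous f := hfC.continuous
  have hDc : Continuous (fderiv ℝ f) := hfC.continuous_fderiv one_ne_zero
  set w : Fin n → ℝ := (q : ℝ) • v with hw_def
  have hqpos : (0:ℝ) < q := by exact_mod_cast hq
  have htw : ∀ t : ℝ, (t * q) • v = t • w := fun t => (smul_smul t (q:ℝ) v).symm
  -- periodicity of f with period w
  have hfp : ∀ x, f (x + w) = f x := by
    intro x
    choose m hm using hv
    have hwm : w = fun i => ((m i : ℤ) : ℝ) := funext fun i => by
      simp only [hw_def, Pi.smul_apply, smul_eq_mul]; exact hm i
    rw [hwm]; exact hper I x m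
  -- the orbit function h and its derivative
  set h : ℝ → ℝ := fun t => f (θ + t • w) with hh_def
  set h' : ℝ → ℝ := fun t => fderiv ℝ f (θ + t • w) w with hh'_def
  have hγ : ∀ t : ℝ, HasDerivAt (fun s : ℝ => θ + s • w) w t := by
    intro t
    simpa using ((hasDerivAt_id t).smul_const w).const_add θ
  have hhd : ∀ t : ℝ, HasDerivAt h (h' t) t := fun t =>
    (hfd (θ + t • w)).hasFDerivAt.comp_hasDerivAt t (hγ t)
  have hcont_orbit : ∀ x : Fin n → ℝ, Continuous (fun t : ℝ => x + t • w) :=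
    fun x => continuous_const.add (continuous_id.smul continuous_const)
  have hh'c : Continuous h' := by
    have : Continuous (fun t : ℝ => fderiv ℝ f (θ + t • w)) := hDc.comp (hcont_orbit θ)
    exact this.clm_apply continuous_const
  have hhc : Continuous h := hfc.comp (hcont_orbit θ)
  -- Pavg in terms of f
  have PavgEq : ∀ x, Pavg I x = ∫ t in (0:ℝ)..1, f (x + t • w) := by
    intro x; rw [hPavg]; simp_rw [htw]; rfl
  -- invariance of Pavg along the orbit
  have Pinv : ∀ (x : Fin n → ℝ) (s : ℝ), Pavg I (x + s • w) = Pavg I x := by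
    intro x s
    set g : ℝ → ℝ := fun u => f (x + u • w) with hg_def
    have hgper : Function.Periodic g 1 := by
      intro u
      simp only [hg_def]
      rw [add_smul, one_smul, ← add_assoc]
      exact hfp (x + u • w)
    have h1 : ∀ t : ℝ, f (x + s • w + t • w) = g (t + s) := by
      intro t; simp only [hg_def]; congr 1; rw [add_smul]; abel
    rw [PavgEq, PavgEq]
    simp_rw [h1]
    rw [intervalIntegral.integral_comp_add_right (fun u => g u) s]
    have := hgper.intervalIntegral_add_eq s 0
    simpa [add_comm] using this
  -- F in terms of the two parametric integrals
  have FEq : ∀ x, F I x =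
      (q:ℝ) * (∫ t in (0:ℝ)..1, f (x + t • w) * t)
        - ((q:ℝ)/2) * (∫ t in (0:ℝ)..1, f (x + t • w) * 1) := by
    intro x
    rw [hF]
    simp_rw [htw, Pinv x]
    have hint1 : IntervalIntegrable (fun t => f (x + t • w) * t) volume 0 1 :=
      ((hfc.comp (hcont_orbit x)).mul continuous_id).intervalIntegrable 0 1
    have hint2 : IntervalIntegrable (fun t => Pavg I x * t) volume 0 1 :=
      (continuous_const.mul continuous_id).intervalIntegrable 0 1
    have : (∫ t in (0:ℝ)..1, (f (x + t • w) - Pavg I x) * t)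
        = (∫ t in (0:ℝ)..1, f (x + t • w) * t) - Pavg I x * ∫ t in (0:ℝ)..1, t := by
      simp_rw [sub_mul]
      rw [intervalIntegral.integral_sub hint1 hint2, intervalIntegral.integral_const_mul]
    rw [this, integral_id]
    have : Pavg I x = ∫ t in (0:ℝ)..1, f (x + t • w) * 1 := by
      rw [PavgEq]; simp
    rw [← this]; ring
  -- derivatives of the two parametric integrals
  have hA1 := paramDeriv hfC w (fun t => t) continuous_id θ
  have hA0 := paramDeriv hfC w (fun _ => (1:ℝ)) continuous_const θ
  set L1 := ∫ t in (0:ℝ)..1, (fun t : ℝ => t) t • fderiv ℝ f (θ + t • w) with hL1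
  set L0 := ∫ t in (0:ℝ)..1, (fun _ : ℝ => (1:ℝ)) t • fderiv ℝ f (θ + t • w) with hL0
  have hFd : HasFDerivAt (fun x => F I x) ((q:ℝ) • L1 - ((q:ℝ)/2) • L0) θ := by
    have : (fun x => F I x) = fun x =>
        (q:ℝ) * (∫ t in (0:ℝ)..1, f (x + t • w) * t)
          - ((q:ℝ)/2) * (∫ t in (0:ℝ)..1, f (x + t • w) * 1) := funext FEq
    rw [this]
    exact (hA1.const_mul _).sub (hA0.const_mul _)
  -- integrability of the CLM-valued integrands
  have hDorbC : Continuous (fun t : ℝ => fderiv ℝ f (θ + t • w)) := hDc.comp (hcont_orbit θ)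
  have hint1 : IntervalIntegrable (fun t : ℝ => (fun t : ℝ => t) t • fderiv ℝ f (θ + t • w))
      volume 0 1 := (continuous_id.smul hDorbC).intervalIntegrable 0 1
  have hint0 : IntervalIntegrable (fun t : ℝ => (fun _ : ℝ => (1:ℝ)) t • fderiv ℝ f (θ + t • w))
      volume 0 1 := ((continuous_const (y := (1:ℝ))).smul hDorbC : Continuous (fun t : ℝ => (fun _ : ℝ => (1:ℝ)) t • fderiv ℝ f (θ + t • w))).intervalIntegrable 0 1
  -- key identity: applying to v gives h'/q
  have happ : ∀ t : ℝ, (q:ℝ) * (fderiv ℝ f (θ + t • w) v) = h' t := by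
    intro t
    simp only [hh'_def, hw_def]
    rw [ContinuousLinearMap.map_smul, smul_eq_mul]
  -- endpoint values
  have hh1 : h 1 = P I θ := by
    show f (θ + (1:ℝ) • w) = P I θ
    rw [one_smul, hfp θ]
  have hh0 : h 0 = P I θ := by simp [hh_def, hf_def]
  have hinth : (∫ t in (0:ℝ)..1, h t) = Pavg I θ := by
    rw [PavgEq]
  -- FTC: integral of h' is 0
  have hftc : (∫ t in (0:ℝ)..1, h' t) = 0 := by
    rw [intervalIntegral.integral_eq_sub_of_hasDerivAt (fun t _ => hhd t)
      (hh'c.intervalIntegrable 0 1)]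
    rw [hh1, hh0, sub_self]
  -- integration by parts: ∫ t * h' t = h 1 - ∫ h
  have hibp : (∫ t in (0:ℝ)..1, t * h' t) = P I θ - Pavg I θ := by
    have := intervalIntegral.integral_mul_deriv_eq_deriv_mul
      (u := fun t : ℝ => t) (u' := fun _ => (1:ℝ)) (v := h) (v' := h')
      (fun t _ => hasDerivAt_id t) (fun t _ => hhd t)
      (continuous_const.intervalIntegrable 0 1) (hh'c.intervalIntegrable 0 1)
    rw [this, hh1, hh0]
    simp only [one_mul, zero_mul, sub_zero]
    rw [hinth]
  -- value of the derivative of F I at v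
  have DFv : fderiv ℝ (fun θ' => F I θ') θ v = P I θ - Pavg I θ := by
    rw [hFd.fderiv]
    rw [ContinuousLinearMap.sub_apply, ContinuousLinearMap.smul_apply,
      ContinuousLinearMap.smul_apply, smul_eq_mul, smul_eq_mul]
    rw [hL1, hL0, ContinuousLinearMap.intervalIntegral_apply hint1 v,
      ContinuousLinearMap.intervalIntegral_apply hint0 v]
    simp only [ContinuousLinearMap.smul_apply, smul_eq_mul, one_mul]
    rw [← intervalIntegral.integral_const_mul, ← intervalIntegral.integral_const_mul]
    have e1 : ∀ t : ℝ, (q:ℝ) * (t * (fderiv ℝ f (θ + t • w)) v) = t * h' t := by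
      intro t; rw [← happ t]; ring
    have e0 : ∀ t : ℝ, ((q:ℝ)/2) * (fderiv ℝ f (θ + t • w)) v = (1/2) * h' t := by
      intro t; rw [← happ t]; ring
    simp_rw [e1, e0]
    rw [intervalIntegral.integral_const_mul, hftc, hibp]
    ring
  -- derivative of N
  set LN : (Fin n → ℝ) →L[ℝ] ℝ := ∑ j, v j • (ContinuousLinearMap.proj j) with hLN
  have hNapp : ∀ u : Fin n → ℝ, LN u = ∑ j, v j * u j := by
    intro u
    simp [hLN, ContinuousLinearMap.sum_apply, ContinuousLinearMap.smul_apply,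
      ContinuousLinearMap.proj_apply, smul_eq_mul]
  have hNd : HasFDerivAt (fun I' => N I') LN I := by
    have : (fun I' => N I') = fun I' => e + LN I' := funext fun I' => by
      rw [hN, hNapp]
    rw [this]
    exact (LN.hasFDerivAt).const_add e
  have hNv : ∀ i, fderiv ℝ (fun I' => N I') I (unit i) = v i := by
    intro i
    rw [hNd.fderiv, hNapp, hunit]
    simp [Pi.single_apply, mul_ite, Finset.sum_ite_eq']
  -- constant term
  have hconst : fderiv ℝ (fun _ : Fin n → ℝ => N I) θ = 0 := fderiv_const_apply _
  -- put it together
  simp_rw [hNv, hconst, ContinuousLinearMap.zero_apply, mul_zero, sub_zero]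
  have hsum : ∑ i, fderiv ℝ (fun θ' => F I θ') θ (unit i) * v i
      = fderiv ℝ (fun θ' => F I θ') θ v := by
    have hv_sum : ∑ i, v i • unit i = v := by
      funext j
      simp [hunit, Pi.single_apply, Finset.sum_ite_eq']
    calc ∑ i, fderiv ℝ (fun θ' => F I θ') θ (unit i) * v i
        = ∑ i, fderiv ℝ (fun θ' => F I θ') θ (v i • unit i) := by
          refine Finset.sum_congr rfl fun i _ => ?_
          rw [ContinuousLinearMap.map_smul, smul_eq_mul]
          exact mul_comm _ _
      _ = fderiv ℝ (fun θ' => F I θ') θ (∑ i, v i • unit i) := (map_sum _ _ _).symm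
      _ = _ := by rw [hv_sum]
  rw [hsum, DFv]
end
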